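/- Let A₁,…,A_{n+2} be points on the unit sphere Sⁿ of ℝ^{n+1} in general position, and let α₁,…,α_{n+2} be nonzero reals with Σᵢ αᵢAᵢ = 0. Regard ℝ^{n+1} as a subspace of ℝ^{n+2}, so the Aᵢ lie on the unit sphere S^{n+1} of ℝ^{n+2}. Suppose B₁,…,B_{n+2} are points on the unit sphere S^{n+1} of ℝ^{n+2} satisfying the tensegrity constraints of G_{n,1}: ‖Bᵢ − B_j‖ ≤ ‖Aᵢ − A_j‖ whenever αᵢα_j < 0, and ‖Bᵢ − B_j‖ ≥ ‖Aᵢ − A_j‖ whenever αᵢα_j > 0. Then ‖Bᵢ − B_j‖ = ‖Aᵢ − A_j‖ for all i, j; i.e. G_{n,1} is globally rigid in S^{n+1}. -/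

import Mathlib

/-- Points on the unit sphere of `ℝ^{d}` are in spherical general position if every `d` of
them are linearly independent. -/
def SphGeneralPosition {d m : ℕ} (A : Fin m → EuclideanSpace ℝ (Fin d)) : Prop :=
  ∀ s : Finset (Fin m), s.card = d → LinearIndependent ℝ (fun i : ↥s => A i.1)

lemma key_sum {m d : ℕ} (α : Fin m → ℝ) (X : Fin m → EuclideanSpace ℝ (Fin d))
    (hX : ∀ k, ‖X k‖ = 1) :
    ∑ p, ∑ q, α p * α q * ‖X p - X q‖ ^ 2
      = 2 * (∑ k, α k) ^ 2 - 2 * ‖∑ k, α k • X k‖ ^ 2 := by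
  have h1 : ∀ p q : Fin m, ‖X p - X q‖ ^ 2
      = 2 - 2 * (inner ℝ (X p) (X q) : ℝ) := by
    intro p q
    have := @norm_sub_sq_real (EuclideanSpace ℝ (Fin d)) _ _ (X p) (X q)
    rw [this, hX, hX]; ring
  have h2 : (inner ℝ (∑ k, α k • X k) (∑ k, α k • X k) : ℝ)
      = ∑ p, ∑ q, α p * α q * (inner ℝ (X p) (X q) : ℝ) := by
    rw [sum_inner]
    refine Finset.sum_congr rfl fun p _ => ?_
    rw [inner_sum]
    refine Finset.sum_congr rfl fun q _ => ?_
    rw [real_inner_smul_left, real_inner_smul_right]; ring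
  have h3 : ‖∑ k, α k • X k‖ ^ 2 = (inner ℝ (∑ k, α k • X k) (∑ k, α k • X k) : ℝ) :=
    (real_inner_self_eq_norm_sq _).symm
  have h4 : (∑ k, α k) ^ 2 = ∑ p, ∑ q, α p * α q := by
    rw [sq, Finset.sum_mul_sum]
  calc ∑ p, ∑ q, α p * α q * ‖X p - X q‖ ^ 2
      = ∑ p, ∑ q, (2 * (α p * α q) - 2 * (α p * α q * (inner ℝ (X p) (X q) : ℝ))) := by
        refine Finset.sum_congr rfl fun p _ => Finset.sum_congr rfl fun q _ => ?_
        rw [h1]; ring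
    _ = 2 * (∑ p, ∑ q, α p * α q)
        - 2 * (∑ p, ∑ q, α p * α q * (inner ℝ (X p) (X q) : ℝ)) := by
        simp [Finset.sum_sub_distrib, Finset.mul_sum]
    _ = 2 * (∑ k, α k) ^ 2 - 2 * ‖∑ k, α k • X k‖ ^ 2 := by
        rw [h3, h2, h4]

/-- The framework `G_{n,1}` is globally rigid in `S^{n+1}`: if points `B₁, …, B_{n+2}` on the
unit sphere of `ℝ^{n+2}` satisfy the cable-strut constraints determined by the signs of
`αᵢα_j`, then all the distances are preserved. -/
theorem G_n1_globally_rigid_sphere {n : ℕ}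
    (A : Fin (n + 2) → EuclideanSpace ℝ (Fin (n + 1)))
    (hA : ∀ i, ‖A i‖ = 1)
    (hgp : SphGeneralPosition A)
    (α : Fin (n + 2) → ℝ) (hα : ∀ i, α i ≠ 0)
    (hsum : ∑ i, α i • A i = 0)
    (B : Fin (n + 2) → EuclideanSpace ℝ (Fin (n + 2)))
    (hB : ∀ i, ‖B i‖ = 1)
    (hcable : ∀ i j, α i * α j < 0 → ‖B i - B j‖ ≤ ‖A i - A j‖)
    (hstrut : ∀ i j, 0 < α i * α j → ‖A i - A j‖ ≤ ‖B i - B j‖) :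
    ∀ i j, ‖B i - B j‖ = ‖A i - A j‖ := by
  set t : Fin (n + 2) → Fin (n + 2) → ℝ :=
    fun p q => α p * α q * (‖B p - B q‖ ^ 2 - ‖A p - A q‖ ^ 2) with ht
  have hnn : ∀ p q, 0 ≤ t p q := by
    intro p q
    rcases lt_trichotomy (α p * α q) 0 with h | h | h
    · have hle := hcable p q h
      have h2 : ‖B p - B q‖ ^ 2 ≤ ‖A p - A q‖ ^ 2 :=
        pow_le_pow_left₀ (norm_nonneg _) hle 2
      simp only [ht]; nlinarith
    · exact absurd h (mul_ne_zero (hα p) (hα q))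
    · have hle := hstrut p q h
      have h2 : ‖A p - A q‖ ^ 2 ≤ ‖B p - B q‖ ^ 2 :=
        pow_le_pow_left₀ (norm_nonneg _) hle 2
      simp only [ht]; nlinarith
  have hkA := key_sum α A hA
  have hkB := key_sum α B hB
  rw [hsum, norm_zero] at hkA
  have hsplit : ∑ p, ∑ q, t p q
      = (∑ p, ∑ q, α p * α q * ‖B p - B q‖ ^ 2)
        - ∑ p, ∑ q, α p * α q * ‖A p - A q‖ ^ 2 := by
    simp only [ht, mul_sub, Finset.sum_sub_distrib]
  have hle0 : ∑ p, ∑ q, t p q ≤ 0 := by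
    rw [hsplit, hkA, hkB]
    nlinarith [sq_nonneg ‖∑ k, α k • B k‖]
  have hge0 : 0 ≤ ∑ p, ∑ q, t p q :=
    Finset.sum_nonneg fun p _ => Finset.sum_nonneg fun q _ => hnn p q
  have hzero : ∑ p, ∑ q, t p q = 0 := le_antisymm hle0 hge0
  have hrow : ∀ p ∈ Finset.univ, ∑ q, t p q = 0 :=
    (Finset.sum_eq_zero_iff_of_nonneg fun p _ =>
      Finset.sum_nonneg fun q _ => hnn p q).mp hzero
  intro i j
  have hij : t i j = 0 :=
    (Finset.sum_eq_zero_iff_of_nonneg fun q _ => hnn i q).mp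
      (hrow i (Finset.mem_univ i)) j (Finset.mem_univ j)
  have hαij : α i * α j ≠ 0 := mul_ne_zero (hα i) (hα j)
  have hsq : ‖B i - B j‖ ^ 2 = ‖A i - A j‖ ^ 2 := by
    have := mul_eq_zero.mp hij
    rcases this with h | h
    · exact absurd h hαij
    · linarith
  have h0 := norm_nonneg (B i - B j)
  have h1 := norm_nonneg (A i - A j)
  nlinarith [hsq]
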